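/- For any two non-isomorphic finite groups G_1 and G_2, there exists a finite group A such that |Hom(A,G_1)/G_1| ≠ |Hom(A,G_2)/G_2|, where Hom(A,G)/G denotes the set of G-conjugacy orbits of homomorphisms A → G. -/

import Mathlib

/-- The conjugation-orbit equivalence on `Hom(A,G)`: `f ~ g` iff `g` is a
conjugate of `f` by some element of `G`. -/
def conjSetoid (A G : Type*) [Group A] [Group G] : Setoid (A →* G) where
  r f g := ∃ c : G, ∀ x : A, c * f x * c⁻¹ = g x
  iseqv := by
    refine ⟨fun f => ⟨1, by simp⟩, ?_, ?_⟩
    · rintro f g ⟨c, hc⟩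
      exact ⟨c⁻¹, fun x => by rw [← hc x]; group⟩
    · rintro f g h ⟨c, hc⟩ ⟨d, hd⟩
      exact ⟨d * c, fun x => by rw [← hd x, ← hc x]; group⟩

open Function

section Aux

variable {A B C : Type*} [Group A] [Group B] [Group C]

theorem homFinite [Finite A] [Finite B] : Finite (A →* B) :=
  Finite.of_injective (fun f => (f : A → B)) DFunLike.coe_injective

/-- Composing with a `MulEquiv` on the target, restricted to surjective homs. -/
def surjCongrRight (e : B ≃* C) :
    {f : A →* B // Surjective f} ≃ {f : A →* C // Surjective f} where
  toFun g := ⟨e.toMonoidHom.comp g.1, e.surjective.comp g.2⟩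
  invFun g := ⟨e.symm.toMonoidHom.comp g.1, e.symm.surjective.comp g.2⟩
  left_inv g := by
    apply Subtype.ext; apply MonoidHom.ext; intro x; simp
  right_inv g := by
    apply Subtype.ext; apply MonoidHom.ext; intro x; simp

theorem surjCard_pos [Finite A] : 0 < Nat.card {f : A →* A // Surjective f} := by
  haveI : Nonempty {f : A →* A // Surjective f} := ⟨⟨MonoidHom.id A, surjective_id⟩⟩
  haveI : Finite (A →* A) := homFinite
  exact Nat.card_pos

theorem card_le_of_surjCard_ne [Finite A] [Finite B]
    (h : Nat.card {f : A →* B // Surjective f} ≠ 0) :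
    Nat.card B ≤ Nat.card A := by
  haveI : Finite (A →* B) := homFinite
  have hne : Nonempty {f : A →* B // Surjective f} := by
    rcases Nat.card_ne_zero.mp h with ⟨hne, _⟩; exact hne
  obtain ⟨f, hf⟩ := hne
  exact Nat.card_le_card_of_surjective f hf

theorem iso_of_surjCard_ne [Finite A] [Finite B]
    (h : Nat.card {f : A →* B // Surjective f} ≠ 0)
    (hc : Nat.card A = Nat.card B) : Nonempty (A ≃* B) := by
  haveI : Finite (A →* B) := homFinite
  have hne : Nonempty {f : A →* B // Surjective f} := by
    rcases Nat.card_ne_zero.mp h with ⟨hne, _⟩; exact hne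
  obtain ⟨f, hf⟩ := hne
  have hb : Bijective f := (Nat.bijective_iff_surjective_and_card f).mpr ⟨hf, hc⟩
  exact ⟨MulEquiv.ofBijective f hb⟩

/-- Homs with range `H` are in bijection with surjections onto `H`. -/
def rangeFiberEquiv (A : Type*) [Group A] (H : Subgroup B) :
    {f : A →* B // f.range = H} ≃ {f : A →* ↥H // Surjective f} where
  toFun f := ⟨(f.1).codRestrict H (fun x => by
      have hx : f.1 x ∈ f.1.range := ⟨x, rfl⟩
      rwa [f.2] at hx), by
    rintro ⟨y, hy⟩
    rw [← f.2] at hy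
    obtain ⟨x, hx⟩ := hy
    exact ⟨x, Subtype.ext hx⟩⟩
  invFun g := ⟨H.subtype.comp g.1, by
    have hg : (g.1).range = ⊤ := MonoidHom.range_eq_top.mpr g.2
    rw [MonoidHom.range_comp, hg, ← MonoidHom.range_eq_map]
    exact H.range_subtype⟩
  left_inv f := by apply Subtype.ext; apply MonoidHom.ext; intro x; rfl
  right_inv g := by
    apply Subtype.ext; apply MonoidHom.ext; intro x
    apply Subtype.ext; rfl

theorem homCard_eq_sum (A B : Type*) [Group A] [Group B] [Finite A] [Finite B]
    [Fintype (Subgroup B)] :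
    (Nat.card (A →* B)) =
      ∑ H : Subgroup B, Nat.card {f : A →* ↥H // Surjective f} := by
  classical
  haveI : Finite (A →* B) := homFinite
  letI : Fintype (A →* B) := Fintype.ofFinite _
  letI : ∀ H : Subgroup B, Fintype {f : A →* B // f.range = H} :=
    fun H => Fintype.ofFinite _
  calc Nat.card (A →* B)
      = Nat.card (Σ H : Subgroup B, {f : A →* B // f.range = H}) :=
        (Nat.card_congr (Equiv.sigmaFiberEquiv (fun f : A →* B => f.range))).symm
    _ = ∑ H : Subgroup B, Nat.card {f : A →* B // f.range = H} := by
        rw [Nat.card_eq_fintype_card, Fintype.card_sigma]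
        exact Finset.sum_congr rfl fun H _ => (Nat.card_eq_fintype_card).symm
    _ = ∑ H : Subgroup B, Nat.card {f : A →* ↥H // Surjective f} :=
        Finset.sum_congr rfl fun H _ => Nat.card_congr (rangeFiberEquiv A H)

/-- Invariance of the conjugation-orbit count under isomorphism of the target. -/
theorem orbCard_congr {A : Type*} [Group A] {G G' : Type*} [Group G] [Group G']
    (e : G ≃* G') :
    Nat.card (Quotient (conjSetoid A G)) = Nat.card (Quotient (conjSetoid A G')) := by
  refine Nat.card_congr (Quotient.congr ⟨fun f => e.toMonoidHom.comp f,
      fun f => e.symm.toMonoidHom.comp f, ?_, ?_⟩ ?_)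
  · intro f; apply MonoidHom.ext; intro x; simp
  · intro f; apply MonoidHom.ext; intro x; simp
  · intro f g
    constructor
    · rintro ⟨c, hc⟩
      exact ⟨e c, fun x => by
        simp only [Equiv.coe_fn_mk, MonoidHom.coe_comp, MulEquiv.coe_toMonoidHom,
          Function.comp_apply]
        rw [← map_inv, ← map_mul, ← map_mul, hc x]⟩
    · rintro ⟨c, hc⟩
      refine ⟨e.symm c, fun x => ?_⟩
      have h := hc x
      simp only [Equiv.coe_fn_mk, MonoidHom.coe_comp, MulEquiv.coe_toMonoidHom,
        Function.comp_apply] at h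
      apply e.injective
      rw [map_mul, map_mul, map_inv, MulEquiv.apply_symm_apply, h]

end Aux

section Burnside

variable (A G : Type*) [Group A] [Group G]

/-- Burnside's lemma for the conjugation action on `Hom(A,G)`. -/
theorem burnside_conj [Finite A] [Finite G] [Fintype G] :
    Nat.card (Quotient (conjSetoid A G)) * Nat.card G
      = ∑ c : G, Nat.card (A →* ↥(Subgroup.centralizer {c})) := by
  classical
  letI act : MulAction G (A →* G) :=
    { smul := fun c f => (MulAut.conj c).toMonoidHom.comp f
      one_smul := fun f => by
        apply MonoidHom.ext; intro x
        show (MulAut.conj (1 : G)) (f x) = f x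
        simp
      mul_smul := fun c d f => by
        apply MonoidHom.ext; intro x
        show (MulAut.conj (c * d)) (f x) = (MulAut.conj c) ((MulAut.conj d) (f x))
        simp }
  haveI : Finite (A →* G) := homFinite
  letI : Fintype (A →* G) := Fintype.ofFinite _
  letI : ∀ c : G, Fintype (MulAction.fixedBy (A →* G) c) := fun c => Fintype.ofFinite _
  letI : Fintype (Quotient (MulAction.orbitRel G (A →* G))) := Fintype.ofFinite _
  have hb := MulAction.sum_card_fixedBy_eq_card_orbits_mul_card_group G (A →* G)
  have hq : Nat.card (Quotient (conjSetoid A G))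
      = Fintype.card (Quotient (MulAction.orbitRel G (A →* G))) := by
    rw [← Nat.card_eq_fintype_card]
    refine (Nat.card_congr (Quotient.congrRight ?_)).symm
    intro f g
    show f ∈ MulAction.orbit G g ↔ _
    constructor
    · rintro ⟨c, rfl⟩
      refine ⟨c⁻¹, fun x => ?_⟩
      show c⁻¹ * ((MulAut.conj c) (g x)) * c⁻¹⁻¹ = g x
      rw [MulAut.conj_apply]
      group
    · rintro ⟨c, hc⟩
      refine ⟨c⁻¹, ?_⟩
      apply MonoidHom.ext; intro x
      show (MulAut.conj c⁻¹) (g x) = f x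
      rw [MulAut.conj_apply, ← hc x]
      group
  have hfix : ∀ c : G, Fintype.card (MulAction.fixedBy (A →* G) c)
      = Nat.card (A →* ↥(Subgroup.centralizer {c})) := by
    intro c
    rw [← Nat.card_eq_fintype_card]
    refine Nat.card_congr ⟨fun f => (f.1).codRestrict (Subgroup.centralizer {c})
      (fun x => Subgroup.mem_centralizer_singleton_iff.mpr ?_),
      fun g => ⟨(Subgroup.centralizer {c}).subtype.comp g, ?_⟩, ?_, ?_⟩
    · have h : (c • f.1) x = f.1 x := by rw [f.2]
      have h' : c * f.1 x * c⁻¹ = f.1 x := h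
      have h2 := congrArg (fun y => y * c) h'
      calc f.1 x * c = c * f.1 x * c⁻¹ * c := h2.symm
        _ = c * f.1 x := by group
    · show c • _ = _
      apply MonoidHom.ext; intro x
      show (MulAut.conj c) (((Subgroup.centralizer {c}).subtype.comp g) x) = _
      have hx : (g x : G) * c = c * (g x : G) :=
        Subgroup.mem_centralizer_singleton_iff.mp (g x).2
      rw [MulAut.conj_apply]
      simp only [MonoidHom.coe_comp, Function.comp_apply, Subgroup.coe_subtype]
      rw [← hx]
      group
    · intro f
      apply Subtype.ext; apply MonoidHom.ext; intro x; rfl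
    · intro g
      apply MonoidHom.ext; intro x
      apply Subtype.ext; rfl
  rw [hq, Nat.card_eq_fintype_card (α := G), ← hb]
  exact Finset.sum_congr rfl fun c _ => hfix c

end Burnside

/-- A bundled finite group (in `Type 0`). -/
structure FinGrp : Type 1 where
  carrier : Type
  [grp : Group carrier]
  [fin : Finite carrier]

instance : CoeSort FinGrp Type := ⟨FinGrp.carrier⟩
attribute [instance] FinGrp.grp FinGrp.fin

open scoped Classical in
/-- Linear independence of surjection-counting functions, in the form we need. -/
theorem linIndep {I : Type} [Fintype I] (K : I → FinGrp) (w : I → ℤ)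
    (hyp : ∀ (A : Type) (_ : Group A) (_ : Finite A),
      ∑ i, w i * (Nat.card {f : A →* K i // Surjective f} : ℤ) = 0) :
    ∀ i₀, ∑ i ∈ Finset.univ.filter (fun i => Nonempty (K i ≃* K i₀)), w i = 0 := by
  suffices H : ∀ n, ∀ i₀, Nat.card (K i₀) = n →
      ∑ i ∈ Finset.univ.filter (fun i => Nonempty (K i ≃* K i₀)), w i = 0 by
    exact fun i₀ => H _ i₀ rfl
  intro n
  induction n using Nat.strong_induction_on with
  | _ n IH =>
    intro i₀ hn
    have h0 := hyp (K i₀) inferInstance inferInstance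
    have hiso_sc : ∀ i j, Nonempty (K i ≃* K j) →
        (Nat.card {f : K i₀ →* K i // Surjective f} : ℤ)
          = (Nat.card {f : K i₀ →* K j // Surjective f} : ℤ) := by
      rintro i j ⟨e⟩
      exact_mod_cast Nat.card_congr (surjCongrRight (A := K i₀) e)
    have hS : (0 : ℤ) < (Nat.card {f : K i₀ →* K i₀ // Surjective f} : ℤ) := by
      exact_mod_cast surjCard_pos (A := K i₀)
    rw [← Finset.sum_filter_add_sum_filter_not Finset.univ
      (fun i => Nonempty (K i ≃* K i₀))
      (fun i => w i * (Nat.card {f : K i₀ →* K i // Surjective f} : ℤ))] at h0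
    have h1 : ∑ i ∈ Finset.univ.filter (fun i => Nonempty (K i ≃* K i₀)),
          w i * (Nat.card {f : K i₀ →* K i // Surjective f} : ℤ)
        = (Nat.card {f : K i₀ →* K i₀ // Surjective f} : ℤ) *
          ∑ i ∈ Finset.univ.filter (fun i => Nonempty (K i ≃* K i₀)), w i := by
      rw [Finset.mul_sum]
      refine Finset.sum_congr rfl fun i hi => ?_
      rw [hiso_sc i i₀ (Finset.mem_filter.mp hi).2, mul_comm]
    have h2 : ∑ i ∈ Finset.univ.filter (fun i => ¬ Nonempty (K i ≃* K i₀)),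
        w i * (Nat.card {f : K i₀ →* K i // Surjective f} : ℤ) = 0 := by
      set s := Finset.univ.filter (fun i => ¬ Nonempty (K i ≃* K i₀)) with hs
      have hfil : ∑ i ∈ s.filter
            (fun i => (Nat.card {f : K i₀ →* K i // Surjective f} : ℤ) ≠ 0),
            w i * (Nat.card {f : K i₀ →* K i // Surjective f} : ℤ)
          = ∑ i ∈ s, w i * (Nat.card {f : K i₀ →* K i // Surjective f} : ℤ) := by
        refine Finset.sum_filter_of_ne fun i _ h => ?_
        intro h'; exact h (by rw [h', mul_zero])
      rw [← hfil]
      set t := s.filter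
        (fun i => (Nat.card {f : K i₀ →* K i // Surjective f} : ℤ) ≠ 0) with ht
      let R : Setoid I := ⟨fun i j => Nonempty (K i ≃* K j),
        ⟨fun i => ⟨MulEquiv.refl _⟩, fun ⟨e⟩ => ⟨e.symm⟩, fun ⟨e⟩ ⟨e'⟩ => ⟨e.trans e'⟩⟩⟩
      rw [Finset.sum_partition R]
      refine Finset.sum_eq_zero fun xbar hxbar => ?_
      obtain ⟨x, hxt, rfl⟩ := Finset.mem_image.mp hxbar
      have hxs : x ∈ s := (Finset.mem_filter.mp hxt).1
      have hxnot : ¬ Nonempty (K x ≃* K i₀) := (Finset.mem_filter.mp hxs).2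
      have hxne : (Nat.card {f : K i₀ →* K x // Surjective f} : ℤ) ≠ 0 :=
        (Finset.mem_filter.mp hxt).2
      have hclass : t.filter (fun y => (⟦y⟧ : Quotient R) = ⟦x⟧)
          = Finset.univ.filter (fun i => Nonempty (K i ≃* K x)) := by
        ext y
        constructor
        · intro hy
          rcases Finset.mem_filter.mp hy with ⟨_, hq⟩
          exact Finset.mem_filter.mpr ⟨Finset.mem_univ _, Quotient.eq.mp hq⟩
        · intro hy
          have hyx : Nonempty (K y ≃* K x) := (Finset.mem_filter.mp hy).2
          have hysc := hiso_sc y x hyx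
          have hynot : ¬ Nonempty (K y ≃* K i₀) := by
            rintro ⟨e⟩
            obtain ⟨e'⟩ := hyx
            exact hxnot ⟨e'.symm.trans e⟩
          refine Finset.mem_filter.mpr ⟨?_, Quotient.eq.mpr hyx⟩
          rw [ht]
          refine Finset.mem_filter.mpr ⟨?_, by rw [hysc]; exact hxne⟩
          rw [hs]
          exact Finset.mem_filter.mpr ⟨Finset.mem_univ _, hynot⟩
      have hlt : Nat.card (K x) < n := by
        have hle : Nat.card (K x) ≤ Nat.card (K i₀) := by
          refine card_le_of_surjCard_ne (A := K i₀) (B := K x) ?_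
          exact_mod_cast hxne
        rcases lt_or_eq_of_le hle with h | h
        · rwa [hn] at h
        · exfalso
          have hiso2 : Nonempty (K i₀ ≃* K x) := by
            refine iso_of_surjCard_ne (A := K i₀) (B := K x) ?_ h.symm
            exact_mod_cast hxne
          obtain ⟨e⟩ := hiso2
          exact hxnot ⟨e.symm⟩
      have hIH := IH _ hlt x rfl
      rw [hclass]
      calc ∑ y ∈ Finset.univ.filter (fun i => Nonempty (K i ≃* K x)),
            w y * (Nat.card {f : K i₀ →* K y // Surjective f} : ℤ)
          = ∑ y ∈ Finset.univ.filter (fun i => Nonempty (K i ≃* K x)),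
            w y * (Nat.card {f : K i₀ →* K x // Surjective f} : ℤ) :=
            Finset.sum_congr rfl fun y hy => by
              rw [hiso_sc y x (Finset.mem_filter.mp hy).2]
        _ = (∑ y ∈ Finset.univ.filter (fun i => Nonempty (K i ≃* K x)), w y)
            * (Nat.card {f : K i₀ →* K x // Surjective f} : ℤ) :=
            (Finset.sum_mul _ _ _).symm
        _ = 0 := by rw [hIH, zero_mul]
    rw [h1, h2, add_zero, mul_eq_zero] at h0
    rcases h0 with h0 | h0
    · exact absurd h0 hS.ne'
    · exact h0

open scoped Classical in
/-- From equality of all conjugacy-orbit counts, an embedding `B₁ ↪ B₂`. -/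
theorem embed_of_orbEq (B₁ B₂ : Type) [Group B₁] [Group B₂] [Finite B₁] [Finite B₂]
    (h : ∀ (A : Type) (_ : Group A) (_ : Finite A),
      Nat.card (Quotient (conjSetoid A B₁)) = Nat.card (Quotient (conjSetoid A B₂))) :
    ∃ φ : B₁ →* B₂, Injective φ := by
  classical
  letI : Fintype B₁ := Fintype.ofFinite _
  letI : Fintype B₂ := Fintype.ofFinite _
  letI : ∀ c : B₁, Fintype (Subgroup ↥(Subgroup.centralizer ({c} : Set B₁))) :=
    fun c => Fintype.ofFinite _
  letI : ∀ c : B₂, Fintype (Subgroup ↥(Subgroup.centralizer ({c} : Set B₂))) :=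
    fun c => Fintype.ofFinite _
  let I : Type := (Σ c : B₁, Subgroup ↥(Subgroup.centralizer ({c} : Set B₁))) ⊕
      (Σ c : B₂, Subgroup ↥(Subgroup.centralizer ({c} : Set B₂)))
  let K : I → FinGrp := fun i => match i with
    | .inl p => ⟨↥p.2⟩
    | .inr p => ⟨↥p.2⟩
  let w : I → ℤ := fun i => match i with
    | .inl _ => (Nat.card B₂ : ℤ)
    | .inr _ => -(Nat.card B₁ : ℤ)
  have hyp : ∀ (A : Type) (_ : Group A) (_ : Finite A),
      ∑ i, w i * (Nat.card {f : A →* K i // Surjective f} : ℤ) = 0 := by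
    intro A iA fA
    have hB := h A iA fA
    have b₁ := burnside_conj A B₁
    have b₂ := burnside_conj A B₂
    have keyN : Nat.card B₂ * ∑ c : B₁, Nat.card (A →* ↥(Subgroup.centralizer {c}))
        = Nat.card B₁ * ∑ c : B₂, Nat.card (A →* ↥(Subgroup.centralizer {c})) := by
      rw [← b₁, ← b₂, hB]; ring
    have hl : ∑ p : (Σ c : B₁, Subgroup ↥(Subgroup.centralizer ({c} : Set B₁))),
        w (Sum.inl p) * (Nat.card {f : A →* K (Sum.inl p) // Surjective f} : ℤ)
        = (Nat.card B₂ : ℤ) *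
          ∑ c : B₁, (Nat.card (A →* ↥(Subgroup.centralizer {c})) : ℤ) := by
      rw [← Finset.univ_sigma_univ, Finset.sum_sigma, Finset.mul_sum]
      refine Finset.sum_congr rfl fun c _ => ?_
      rw [homCard_eq_sum A ↥(Subgroup.centralizer ({c} : Set B₁))]
      push_cast
      rw [Finset.mul_sum]
    have hr : ∑ p : (Σ c : B₂, Subgroup ↥(Subgroup.centralizer ({c} : Set B₂))),
        w (Sum.inr p) * (Nat.card {f : A →* K (Sum.inr p) // Surjective f} : ℤ)
        = -((Nat.card B₁ : ℤ) *
          ∑ c : B₂, (Nat.card (A →* ↥(Subgroup.centralizer {c})) : ℤ)) := by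
      rw [← Finset.univ_sigma_univ, Finset.sum_sigma, Finset.mul_sum,
        ← Finset.sum_neg_distrib]
      refine Finset.sum_congr rfl fun c _ => ?_
      rw [homCard_eq_sum A ↥(Subgroup.centralizer ({c} : Set B₂))]
      push_cast
      rw [Finset.mul_sum, ← Finset.sum_neg_distrib]
      exact Finset.sum_congr rfl fun H _ => neg_mul _ _
    have keyI : (Nat.card B₂ : ℤ) *
          ∑ c : B₁, (Nat.card (A →* ↥(Subgroup.centralizer {c})) : ℤ)
        = (Nat.card B₁ : ℤ) *
          ∑ c : B₂, (Nat.card (A →* ↥(Subgroup.centralizer {c})) : ℤ) := by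
      exact_mod_cast keyN
    calc ∑ i : I, w i * (Nat.card {f : A →* K i // Surjective f} : ℤ)
        = (∑ p : (Σ c : B₁, Subgroup ↥(Subgroup.centralizer ({c} : Set B₁))),
            w (Sum.inl p) * (Nat.card {f : A →* K (Sum.inl p) // Surjective f} : ℤ))
          + ∑ p : (Σ c : B₂, Subgroup ↥(Subgroup.centralizer ({c} : Set B₂))),
            w (Sum.inr p) * (Nat.card {f : A →* K (Sum.inr p) // Surjective f} : ℤ) :=
          Fintype.sum_sum_type _
      _ = 0 := by rw [hl, hr, keyI]; ring
  have hconc := linIndep (I := I) K w hyp (Sum.inl ⟨1, ⊤⟩)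
  haveI : Nonempty B₂ := ⟨1⟩
  have hcent : Subgroup.centralizer ({(1 : B₁)} : Set B₁) = ⊤ := by
    rw [Subgroup.eq_top_iff']
    intro z
    simp [Subgroup.mem_centralizer_singleton_iff]
  let i₀ : I := Sum.inl ⟨1, ⊤⟩
  have κ : K i₀ ≃* B₁ :=
    Subgroup.topEquiv.trans ((MulEquiv.subgroupCongr hcent).trans Subgroup.topEquiv)
  have hex : ∃ p : (Σ c : B₂, Subgroup ↥(Subgroup.centralizer ({c} : Set B₂))),
      Nonempty (K (Sum.inr p) ≃* K i₀) := by
    by_contra hno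
    push_neg at hno
    have hpos : 0 < ∑ i ∈ Finset.univ.filter (fun i => Nonempty (K i ≃* K i₀)), w i := by
      refine Finset.sum_pos ?_
        ⟨i₀, Finset.mem_filter.mpr ⟨Finset.mem_univ _, ⟨MulEquiv.refl _⟩⟩⟩
      intro i hi
      rcases i with p | p
      · show (0 : ℤ) < ((Nat.card B₂ : ℕ) : ℤ)
        have hp : 0 < Nat.card B₂ := Nat.card_pos
        exact_mod_cast hp
      · exact absurd (Finset.mem_filter.mp hi).2 (not_nonempty_iff.mpr (hno p))
    rw [hconc] at hpos
    exact lt_irrefl _ hpos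
  obtain ⟨⟨c₂, H₂⟩, ⟨e⟩⟩ := hex
  let ψ : B₁ →* B₂ := (Subgroup.centralizer ({c₂} : Set B₂)).subtype.comp
      (H₂.subtype.comp ((κ.symm.trans e.symm).toMonoidHom))
  refine ⟨ψ, ?_⟩
  intro a b hab
  apply (κ.symm.trans e.symm).injective
  apply Subtype.ext
  apply Subtype.ext
  simpa [ψ, MonoidHom.coe_comp, Function.comp_apply, Subgroup.coe_subtype] using hab

theorem exists_group_distinguishing_conj_classes
    (G₁ G₂ : Type*) [Group G₁] [Group G₂] [Finite G₁] [Finite G₂]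
    (hiso : ¬Nonempty (G₁ ≃* G₂)) :
    ∃ (A : Type) (_ : Group A) (_ : Finite A),
      Nat.card (Quotient (conjSetoid A G₁)) ≠
        Nat.card (Quotient (conjSetoid A G₂)) := by
  by_contra hcon
  push_neg at hcon
  haveI : Small.{0} G₁ := by infer_instance
  haveI : Small.{0} G₂ := by infer_instance
  let B₁ : Type := Shrink.{0} G₁
  let B₂ : Type := Shrink.{0} G₂
  haveI : Finite B₁ := Finite.of_equiv G₁ (equivShrink G₁)
  haveI : Finite B₂ := Finite.of_equiv G₂ (equivShrink G₂)
  let E₁ : B₁ ≃* G₁ := Shrink.mulEquiv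
  let E₂ : B₂ ≃* G₂ := Shrink.mulEquiv
  have h' : ∀ (A : Type) (iA : Group A) (fA : Finite A),
      Nat.card (Quotient (conjSetoid A B₁)) = Nat.card (Quotient (conjSetoid A B₂)) := by
    intro A iA fA
    calc Nat.card (Quotient (conjSetoid A B₁))
        = Nat.card (Quotient (conjSetoid A G₁)) := orbCard_congr E₁
      _ = Nat.card (Quotient (conjSetoid A G₂)) := hcon A iA fA
      _ = Nat.card (Quotient (conjSetoid A B₂)) := (orbCard_congr E₂).symm
  obtain ⟨φ, hφ⟩ := embed_of_orbEq B₁ B₂ h'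
  obtain ⟨ψ, hψ⟩ := embed_of_orbEq B₂ B₁ (fun A iA fA => (h' A iA fA).symm)
  have hc : Nat.card B₁ = Nat.card B₂ :=
    le_antisymm (Nat.card_le_card_of_injective φ hφ) (Nat.card_le_card_of_injective ψ hψ)
  have hbij : Bijective φ := (Nat.bijective_iff_injective_and_card φ).mpr ⟨hφ, hc⟩
  exact hiso ⟨E₁.symm.trans ((MulEquiv.ofBijective φ hbij).trans E₂)⟩
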